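/- Let A be a commutative Noetherian ring and let U be a bounded complex of finitely generated projective A-modules whose total cohomology H^*(U) has finite length. Then the dual complex U^* = Hom_A(U, A) also has cohomology of finite length. -/

import Mathlib

open CategoryTheory Limits

section DualDef
variable (A : Type) [CommRing A]

/-- The dual of a cochain complex `X` of `A`-modules: `(X^*)^n = Hom_A(X^{-n}, A)`, with
differential given by precomposition with the differential of `X`. -/
noncomputable def dualComplex (X : CochainComplex (ModuleCat.{0} A) ℤ) :
    CochainComplex (ModuleCat.{0} A) ℤ :=
  CochainComplex.of (fun n => ModuleCat.of A (X.X (-n) →ₗ[A] A))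
    (fun n => ModuleCat.ofHom (LinearMap.lcomp A A (X.d (-(n + 1)) (-n)).hom))
    (fun n => by
      ext f x
      have h2 : X.d (-(n + 1)) (-n) (X.d (-(n + 1 + 1)) (-(n + 1)) x) = 0 := by
        rw [show (X.d (-(n + 1)) (-n)) ((X.d (-(n + 1 + 1)) (-(n + 1))) x) =
          (X.d (-(n + 1 + 1)) (-(n + 1)) ≫ X.d (-(n + 1)) (-n)) x from rfl,
          X.d_comp_d]
        rfl
      let g : ↑(X.X (-n)) →ₗ[A] A := f
      show g (X.d (-(n + 1)) (-n) (X.d (-(n + 1 + 1)) (-(n + 1)) x)) = (0 : A)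
      rw [h2, map_zero])

end DualDef

section Algebra
variable {A : Type} [CommRing A]


/-- A Noetherian module annihilated by an ideal of finite colength is Artinian. -/
theorem isArtinian_of_annihilator {M : Type} [AddCommGroup M] [Module A M] [IsNoetherian A M]
    (J : Ideal A) (hJ : IsFiniteLength A (A ⧸ J))
    (hann : ∀ x ∈ J, ∀ m : M, x • m = 0) : IsArtinian A M := by
  classical
  obtain ⟨hJn, hJa⟩ := isFiniteLength_iff_isNoetherian_isArtinian.mp hJ
  obtain ⟨s, hs⟩ := IsNoetherian.noetherian (⊤ : Submodule A M)
  set ι := {x : M // x ∈ s}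
  let lift : ι → ((A ⧸ J) →ₗ[A] M) := fun i =>
    Submodule.liftQ J (LinearMap.toSpanSingleton A M i.1)
      (fun x hx => by simpa using hann x hx i.1)
  let Φ : (ι → A ⧸ J) →ₗ[A] M := LinearMap.lsum A (fun _ : ι => A ⧸ J) A lift
  have hsurj : Function.Surjective Φ := by
    rw [← LinearMap.range_eq_top, ← top_le_iff, ← hs, Submodule.span_le]
    intro m hm
    refine ⟨Pi.single ⟨m, hm⟩ (1 : A ⧸ J), ?_⟩
    classical
    rw [show (Pi.single (⟨m, hm⟩ : ι) (1 : A ⧸ J)) = (LinearMap.single A (fun _ : ι => A ⧸ J) ⟨m, hm⟩) 1 from rfl]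
    simp only [Φ, LinearMap.lsum_apply, LinearMap.coe_sum, LinearMap.coe_comp,
      Function.comp_apply, Finset.sum_apply, LinearMap.coe_single, LinearMap.coe_proj]
    rw [Fintype.sum_eq_single (⟨m, hm⟩ : ι) (fun j hj => by
      rw [Function.eval, Pi.single_eq_of_ne hj, map_zero])]
    rw [Function.eval, Pi.single_eq_same]
    show lift ⟨m, hm⟩ (Submodule.Quotient.mk 1) = m
    rw [Submodule.liftQ_apply]
    simp
  exact isArtinian_of_surjective _ Φ hsurj

/-- The annihilator of a f.g. finite-length module has finite colength. -/
theorem quot_annihilator_isFiniteLength {M : Type} [AddCommGroup M] [Module A M]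
    [IsNoetherian A M] (hM : IsFiniteLength A M) :
    IsFiniteLength A (A ⧸ Module.annihilator A M) := by
  classical
  obtain ⟨hMn, hMa⟩ := isFiniteLength_iff_isNoetherian_isArtinian.mp hM
  obtain ⟨s, hs⟩ := IsNoetherian.noetherian (⊤ : Submodule A M)
  set ι := {x : M // x ∈ s}
  let Ψ : A →ₗ[A] (ι → M) := LinearMap.pi (fun i => LinearMap.toSpanSingleton A M i.1)
  have hker : LinearMap.ker Ψ = Module.annihilator A M := by
    ext x
    simp only [LinearMap.mem_ker, Module.mem_annihilator]
    constructor
    · intro hx m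
      have hm : m ∈ Submodule.span A (s : Set M) := hs ▸ Submodule.mem_top
      induction hm using Submodule.span_induction with
      | mem y hy => exact congrFun hx ⟨y, hy⟩
      | zero => simp
      | add y z _ _ hy hz => rw [smul_add, hy, hz, add_zero]
      | smul a y _ hy => rw [smul_comm, hy, smul_zero]
    · intro hx
      funext i
      exact hx i.1
  have e : (A ⧸ Module.annihilator A M) ≃ₗ[A] LinearMap.range Ψ :=
    (Submodule.quotEquivOfEq _ _ hker.symm).trans (LinearMap.quotKerEquivRange Ψ)
  refine (LinearEquiv.isFiniteLength e.symm ?_)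
  rw [isFiniteLength_iff_isNoetherian_isArtinian]
  exact ⟨inferInstance, inferInstance⟩

/-- quotient by product of two cofinite-length ideals. -/
theorem quot_mul_isFiniteLength [IsNoetherianRing A] (I J : Ideal A)
    (hI : IsFiniteLength A (A ⧸ I)) (hJ : IsFiniteLength A (A ⧸ J)) :
    IsFiniteLength A (A ⧸ (I * J)) := by
  rw [isFiniteLength_iff_isNoetherian_isArtinian]
  refine ⟨inferInstance, ?_⟩
  refine (isArtinian_iff_submodule_quotient (R := A) (P := A ⧸ (I * J)) (Submodule.map (Submodule.mkQ (I * J)) I)).mpr ⟨?_, ?_⟩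
  · exact isArtinian_of_annihilator J hJ (by
      rintro x hx ⟨m, hm⟩
      rw [Subtype.ext_iff]
      obtain ⟨y, hy, rfl⟩ := Submodule.mem_map.mp hm
      show x • Submodule.Quotient.mk y = (0 : A ⧸ (I*J))
      rw [← Submodule.Quotient.mk_smul, Submodule.Quotient.mk_eq_zero]
      have : y * x ∈ I * J := Ideal.mul_mem_mul hy hx
      simpa [smul_eq_mul, mul_comm] using this)
  · exact LinearEquiv.isFiniteLength
      (Submodule.quotientQuotientEquivQuotient (I*J) I Ideal.mul_le_left).symm hI
      |> fun h => (isFiniteLength_iff_isNoetherian_isArtinian.mp h).2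

/-- product of ideals is contained in K if all pure products are. -/
theorem prod_ideal_le {ι : Type} (s : Finset ι) (I : ι → Ideal A) (K : Ideal A)
    (h : ∀ a : ι → A, (∀ i, a i ∈ I i) → (∏ i ∈ s, a i) ∈ K) :
    (∏ i ∈ s, I i) ≤ K := by
  classical
  induction s using Finset.induction generalizing K with
  | empty =>
    have h1 : (1 : A) ∈ K := by simpa using h (fun _ => 0) (fun i => zero_mem _)
    rw [Finset.prod_empty, Ideal.one_eq_top, (Ideal.eq_top_iff_one K).mpr h1]
  | @insert j t hj ih =>
    rw [Finset.prod_insert hj, Ideal.mul_le]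
    intro r hr w hw
    have key := ih (K := Submodule.comap (r • (LinearMap.id : A →ₗ[A] A)) K) ?_ hw
    · simpa [smul_eq_mul] using key
    · intro a ha
      have h2 := h (Function.update a j r) (fun i => by
        by_cases hij : i = j
        · subst hij; rw [Function.update_self]; exact hr
        · rw [Function.update_of_ne hij]; exact ha i)
      rw [Finset.prod_insert hj, Function.update_self,
        Finset.prod_congr rfl (fun i hi =>
          Function.update_of_ne (fun hij : i = j => hj (hij ▸ hi)) r a)] at h2
      simpa [smul_eq_mul] using h2


end Algebra

section Homotopy

variable {A : Type} [CommRing A]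

/-- One step of the descending construction of the homotopy. -/
theorem homotopy_step (U : CochainComplex (ModuleCat.{0} A) ℤ)
    (hproj : ∀ i : ℤ, Module.Projective A (U.X i))
    (a : ℤ → A)
    (ha : ∀ i' i i'' : ℤ, i' + 1 = i → i + 1 = i'' → ∀ z : U.X i,
      U.d i i'' z = 0 → a i • z ∈ LinearMap.range (U.d i' i).hom)
    (c : A) (k : ℤ)
    (s : ∀ i j : ℤ, (U.X i →ₗ[A] U.X j))
    (hs : ∀ i' i i'' : ℤ, i' + 1 = i → i + 1 = i'' → k < i →
      c • (LinearMap.id : U.X i →ₗ[A] U.X i)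
        = (U.d i' i).hom.comp (s i i')
          + (s i'' i).comp (U.d i i'').hom) :
    ∃ s' : ∀ i j : ℤ, (U.X i →ₗ[A] U.X j),
      ∀ i' i i'' : ℤ, i' + 1 = i → i + 1 = i'' → k - 1 < i →
        (c * a k) • (LinearMap.id : U.X i →ₗ[A] U.X i)
          = (U.d i' i).hom.comp (s' i i')
            + (s' i'' i).comp (U.d i i'').hom := by
  classical
  set ψ : U.X k →ₗ[A] U.X k :=
    c • LinearMap.id - (s (k+1) k).comp (U.d k (k+1)).hom with hψdef
  have hdψ : ∀ x : U.X k, (U.d k (k+1)).hom (ψ x) = 0 := by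
    intro x
    have hrel := hs k (k+1) (k+1+1) rfl rfl (by omega)
    have happ := DFunLike.congr_fun hrel ((U.d k (k+1)).hom x)
    have hdd : (U.d (k+1) (k+1+1)).hom
        ((U.d k (k+1)).hom x) = 0 := by
      have h2 := congrArg (fun f => f.hom x) (U.d_comp_d k (k+1) (k+1+1))
      exact h2
    simp only [LinearMap.smul_apply, LinearMap.id_apply, LinearMap.add_apply,
      LinearMap.coe_comp, Function.comp_apply, hdd, map_zero, add_zero] at happ
    simp only [hψdef, LinearMap.sub_apply, LinearMap.smul_apply, LinearMap.id_apply,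
      LinearMap.coe_comp, Function.comp_apply, map_sub, map_smul]
    rw [← happ]
    simp
  have hmem : ∀ x : U.X k, a k • ψ x ∈
      LinearMap.range (U.d (k-1) k).hom := by
    intro x
    have := ha (k-1) k (k+1) (by ring) rfl (ψ x) (hdψ x)
    simpa using this
  haveI := hproj k
  obtain ⟨σ, hσ⟩ := Module.projective_lifting_property
    (LinearMap.rangeRestrict (U.d (k-1) k).hom)
    (LinearMap.codRestrict _ (a k • ψ) hmem)
    (LinearMap.surjective_rangeRestrict _)
  have hdσ : (U.d (k-1) k).hom.comp σ = a k • ψ := by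
    apply LinearMap.ext
    intro x
    have := congrArg Subtype.val (DFunLike.congr_fun hσ x)
    exact this
  refine ⟨Function.update (fun i j => a k • s i j) k
      (Function.update (fun j => a k • s k j) (k-1) σ), ?_⟩
  intro i' i i'' h1 h2 hi
  by_cases hgt : k < i
  · have hik : i ≠ k := by omega
    have hik'' : i'' ≠ k := by omega
    rw [Function.update_of_ne hik, Function.update_of_ne hik'']
    have hold := hs i' i i'' h1 h2 hgt
    rw [LinearMap.comp_smul, LinearMap.smul_comp, ← smul_add, ← hold,
      smul_smul, mul_comm]
  · have hik : i = k := by omega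
    subst hik
    have h1' : i' = i - 1 := by omega
    subst h1'
    subst h2
    rw [Function.update_self, Function.update_self,
      Function.update_of_ne (by omega : i + 1 ≠ i)]
    rw [hdσ, LinearMap.smul_comp, hψdef, smul_sub, sub_add_cancel, smul_smul,
      mul_comm]

/-- The homotopy lemma: a product of annihilating scalars, multiplied with the identity,
is null-homotopic in degrees above `b - t`. -/
theorem homotopy_lemma (U : CochainComplex (ModuleCat.{0} A) ℤ)
    (hproj : ∀ i : ℤ, Module.Projective A (U.X i))
    (b : ℤ) (hb : ∀ i : ℤ, b < i → IsZero (U.X i))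
    (a : ℤ → A)
    (ha : ∀ i' i i'' : ℤ, i' + 1 = i → i + 1 = i'' → ∀ z : U.X i,
      U.d i i'' z = 0 → a i • z ∈ LinearMap.range (U.d i' i).hom)
    (t : ℕ) :
    ∃ s : ∀ i j : ℤ, (U.X i →ₗ[A] U.X j),
      ∀ i' i i'' : ℤ, i' + 1 = i → i + 1 = i'' → b - t < i →
        (∏ r ∈ Finset.range t, a (b - r)) • (LinearMap.id : U.X i →ₗ[A] U.X i)
          = (U.d i' i).hom.comp (s i i')
            + (s i'' i).comp (U.d i i'').hom := by
  induction t with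
  | zero =>
    refine ⟨fun i j => 0, fun i' i i'' h1 h2 hi => ?_⟩
    have hz : (LinearMap.id : U.X i →ₗ[A] U.X i) = 0 :=
      congrArg ModuleCat.Hom.hom ((hb i (by push_cast at hi; omega)).eq_of_src (𝟙 _) 0)
    simp [hz]
  | succ t ih =>
    obtain ⟨s, hs⟩ := ih
    obtain ⟨s', hs'⟩ := homotopy_step U hproj a ha _ (b - t) s hs
    refine ⟨s', fun i' i i'' h1 h2 hi => ?_⟩
    rw [Finset.prod_range_succ]
    exact hs' i' i i'' h1 h2 (by push_cast at hi ⊢; omega)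

end Homotopy

section Homological

variable {A : Type} [CommRing A]

/-- The concrete description of the homology of a cochain complex of modules. -/
noncomputable def concreteHomologyEquiv (V : CochainComplex (ModuleCat.{0} A) ℤ)
    (i' i i'' : ℤ) (h1 : i' + 1 = i) (h2 : i + 1 = i'') :
    (V.homology i) ≃ₗ[A] (V.sc' i' i i'').moduleCatLeftHomologyData.H :=
  ((V.homologyIsoSc' i' i i''
      (by rw [CochainComplex.prev]; omega)
      (by rw [CochainComplex.next]; omega)) ≪≫
    (V.sc' i' i i'').moduleCatHomologyIso).toLinearEquiv

/-- Elements of the annihilator of the concrete homology send cocycles to coboundaries. -/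
theorem ann_smul_mem (U : CochainComplex (ModuleCat.{0} A) ℤ)
    (i' i i'' : ℤ) (h1 : i' + 1 = i) (h2 : i + 1 = i'')
    {x : A} (hx : x ∈ Module.annihilator A ((U.sc' (i-1) i (i+1)).moduleCatLeftHomologyData.H))
    (z : U.X i) (hz : U.d i i'' z = 0) :
    x • z ∈ LinearMap.range (U.d i' i).hom := by
  subst h2
  have h1' : i' = i - 1 := by omega
  subst h1'
  have hzS : z ∈ LinearMap.ker (U.sc' (i-1) i (i+1)).g.hom := hz
  have h0 := Module.mem_annihilator.mp hx
    (Submodule.Quotient.mk (⟨z, hzS⟩ : LinearMap.ker (U.sc' (i-1) i (i+1)).g.hom))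
  have h0' : Submodule.Quotient.mk (x • (⟨z, hzS⟩ : LinearMap.ker (U.sc' (i-1) i (i+1)).g.hom)) =
      (0 : _ ⧸ LinearMap.range (U.sc' (i-1) i (i+1)).moduleCatToCycles) := h0
  rw [Submodule.Quotient.mk_eq_zero] at h0'
  replace h0 := h0' 
  obtain ⟨w, hw⟩ := h0
  exact ⟨w, congrArg Subtype.val hw⟩

/-- The dual of a finite module over a Noetherian ring is Noetherian. -/
theorem isNoetherian_dual [IsNoetherianRing A] (M : Type) [AddCommGroup M] [Module A M]
    [Module.Finite A M] : IsNoetherian A (M →ₗ[A] A) := by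
  classical
  obtain ⟨s, hs⟩ := Module.Finite.fg_top (R := A) (M := M)
  refine isNoetherian_of_injective
    (LinearMap.pi (fun i : {x : M // x ∈ s} => LinearMap.applyₗ i.1)) ?_
  rw [← LinearMap.ker_eq_bot, eq_bot_iff]
  intro f hf
  simp only [LinearMap.mem_ker] at hf
  rw [Submodule.mem_bot]
  apply LinearMap.ext
  intro m
  have hm : m ∈ Submodule.span A (s : Set M) := hs ▸ Submodule.mem_top
  simp only [LinearMap.zero_apply]
  induction hm using Submodule.span_induction with
  | mem y hy =>
    have h3 := congrFun hf ⟨y, hy⟩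
    simpa using h3
  | zero => simp
  | add y z _ _ hy hz => rw [map_add, hy, hz, add_zero]
  | smul a y _ hy => rw [map_smul, hy, smul_zero]

/-- Noetherianity of the concrete homology. -/
theorem isNoetherian_mch (S : ShortComplex (ModuleCat.{0} A)) [IsNoetherian A S.X₂] :
    IsNoetherian A
      (↥(LinearMap.ker (S.g).hom) ⧸ LinearMap.range S.moduleCatToCycles) := by
  haveI : IsNoetherian A ↥(LinearMap.ker (S.g).hom) :=
    isNoetherian_of_injective (Submodule.subtype _) (Submodule.injective_subtype _)
  exact isNoetherian_of_surjective (Submodule.mkQ _)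
    (LinearMap.range_eq_top.mpr (Submodule.mkQ_surjective _))

end Homological

variable (A : Type) [CommRing A]

/-- if `U` is a bounded complex of finitely generated projective modules over
a commutative Noetherian ring `A` whose cohomology has finite length, then the cohomology
of the dual complex `U^* = Hom_A(U, A)` also has finite length. -/
theorem dual_complex_finite_length_cohomology
    [IsNoetherianRing A]
    (U : CochainComplex (ModuleCat.{0} A) ℤ)
    (hbdd : ∃ a b : ℤ, ∀ i : ℤ, (i < a ∨ b < i) → IsZero (U.X i))
    (hfg : ∀ i : ℤ, Module.Finite A (U.X i))
    (hproj : ∀ i : ℤ, Module.Projective A (U.X i))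
    (hfl : ∀ i : ℤ, IsFiniteLength A (U.homology i)) :
    ∀ n : ℤ, IsFiniteLength A ((dualComplex A U).homology n) := by
  classical
  obtain ⟨a₀, b, hbdd⟩ := hbdd
  have hb : ∀ i : ℤ, b < i → IsZero (U.X i) := fun i hi => hbdd i (Or.inr hi)
  set I : ℤ → Ideal A := fun i =>
    Module.annihilator A ((U.sc' (i-1) i (i+1)).moduleCatLeftHomologyData.H) with hI
  have hIfl : ∀ i : ℤ, IsFiniteLength A (A ⧸ I i) := by
    intro i
    haveI := hfg i
    haveI hMF : Module.Finite A ((U.sc' (i-1) i (i+1)).X₂) := hfg i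
    haveI : IsNoetherian A ((U.sc' (i-1) i (i+1)).X₂) :=
      isNoetherian_of_isNoetherianRing_of_finite A _
    haveI : IsNoetherian A ((U.sc' (i-1) i (i+1)).moduleCatLeftHomologyData.H) :=
      isNoetherian_mch _
    exact quot_annihilator_isFiniteLength
      (LinearEquiv.isFiniteLength (concreteHomologyEquiv U (i-1) i (i+1) (by ring) rfl)
        (hfl i))
  intro n
  obtain ⟨p, rfl⟩ : ∃ p : ℤ, n = p + 1 := ⟨n - 1, by ring⟩
  have e := concreteHomologyEquiv (dualComplex A U) p (p+1) (p+1+1) rfl rfl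
  refine LinearEquiv.isFiniteLength e.symm ?_
  rw [isFiniteLength_iff_isNoetherian_isArtinian]
  haveI := hfg (-(p+1))
  haveI hNdual : IsNoetherian A (↑(U.X (-(p+1))) →ₗ[A] A) := isNoetherian_dual _
  haveI hNX : IsNoetherian A (((dualComplex A U).sc' p (p+1) (p+1+1)).X₂) := hNdual
  haveI hNoeth : IsNoetherian A (((dualComplex A U).sc' p (p+1) (p+1+1)).moduleCatLeftHomologyData.H) :=
    isNoetherian_mch _
  refine ⟨hNoeth, ?_⟩
  set T : ℕ := (b + p + 2).toNat with hT
  have hTb : b - (T:ℤ) < -(p+1) := by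
    have := Int.self_le_toNat (b + p + 2)
    omega
  suffices key : IsArtinian A
      (↥(LinearMap.ker (((dualComplex A U).sc' p (p+1) (p+1+1)).g.hom))
        ⧸ LinearMap.range (((dualComplex A U).sc' p (p+1) (p+1+1)).moduleCatToCycles))
    from key
  refine isArtinian_of_annihilator
    (∏ r ∈ Finset.range T, I (b - (r:ℤ))) ?_ ?_
  · clear hTb hT
    induction T with
    | zero =>
      rw [Finset.prod_range_zero]
      haveI : Subsingleton (A ⧸ (1 : Ideal A)) :=
        Submodule.Quotient.subsingleton_iff.mpr (by simp [Ideal.one_eq_top])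
      exact IsFiniteLength.of_subsingleton
    | succ t ih =>
      rw [Finset.prod_range_succ]
      exact quot_mul_isFiniteLength _ _ ih (hIfl _)
  · intro x hx m
    refine Module.mem_annihilator.mp
      (prod_ideal_le (Finset.range T) (fun r => I (b - (r:ℤ)))
        (Module.annihilator A _) ?_ hx) m
    intro a' ha'
    -- extend `a'` to a ℤ-indexed family
    set aZ : ℤ → A := fun i => if h : 0 ≤ b - i then a' (b - i).toNat else 0 with haZ
    have haZmem : ∀ i : ℤ, aZ i ∈ I i := by
      intro i
      rw [haZ]
      dsimp only
      split_ifs with h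
      · have hidx : (b - ((b - i).toNat : ℤ)) = i := by omega
        have h2 : a' (b - i).toNat ∈ I (b - ((b - i).toNat : ℤ)) := ha' (b - i).toNat
        rwa [hidx] at h2
      · exact zero_mem _
    have haZ' : ∀ i' i i'' : ℤ, i' + 1 = i → i + 1 = i'' → ∀ z : U.X i,
        U.d i i'' z = 0 → aZ i • z ∈
          LinearMap.range (U.d i' i).hom :=
      fun i' i i'' h1 h2 z hz => ann_smul_mem U i' i i'' h1 h2 (haZmem i) z hz
    obtain ⟨s, hs⟩ := homotopy_lemma U hproj b hb aZ haZ' T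
    have hc : (∏ r ∈ Finset.range T, aZ (b - (r:ℤ))) = ∏ r ∈ Finset.range T, a' r := by
      refine Finset.prod_congr rfl (fun r _ => ?_)
      rw [haZ]
      dsimp only
      rw [dif_pos (by omega : (0:ℤ) ≤ b - (b - (r:ℤ)))]
      congr 1
      omega
    rw [Module.mem_annihilator]
    intro m
    obtain ⟨q, rfl⟩ := Submodule.Quotient.mk_surjective _ m
    obtain ⟨f, hf⟩ := q
    rw [← Submodule.Quotient.mk_smul, Submodule.Quotient.mk_eq_zero]
    -- differentials of the dual complex
    have hd1 : (dualComplex A U).d p (p+1)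
        = ModuleCat.ofHom (LinearMap.lcomp A A (U.d (-(p+1)) (-p)).hom) :=
      by unfold dualComplex; exact CochainComplex.of_d (fun n => ModuleCat.of A (U.X (-n) →ₗ[A] A)) (fun n => ModuleCat.ofHom (LinearMap.lcomp A A (U.d (-(n + 1)) (-n)).hom)) p
    have hd2 : (dualComplex A U).d (p+1) (p+1+1)
        = ModuleCat.ofHom (LinearMap.lcomp A A (U.d (-(p+1+1)) (-(p+1))).hom) :=
      by unfold dualComplex; exact CochainComplex.of_d (fun n => ModuleCat.of A (U.X (-n) →ₗ[A] A)) (fun n => ModuleCat.ofHom (LinearMap.lcomp A A (U.d (-(n + 1)) (-n)).hom)) (p+1)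
    -- view f as a linear map
    let F : ↑(U.X (-(p+1))) →ₗ[A] A := f
    have h9 : (dualComplex A U).d (p+1) (p+1+1) f = 0 := LinearMap.mem_ker.mp hf
    rw [hd2] at h9
    have hF0 : F.comp (U.d (-(p+1+1)) (-(p+1))).hom = 0 := h9
    have hrel := hs (-(p+1+1)) (-(p+1)) (-p) (by ring) (by ring) (by omega)
    have hval : (dualComplex A U).d p (p+1) (F.comp (s (-p) (-(p+1)))) =
        (∏ r ∈ Finset.range T, a' r) • F := by
      rw [hd1, ← hc]
      apply LinearMap.ext
      intro z
      show F ((s (-p) (-(p+1))) ((U.d (-(p+1)) (-p)).hom z))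
        = ((∏ r ∈ Finset.range T, aZ (b - (r:ℤ))) • F) z
      have hz := DFunLike.congr_fun hrel z
      simp only [LinearMap.smul_apply, LinearMap.id_apply, LinearMap.add_apply,
        LinearMap.coe_comp, Function.comp_apply] at hz
      have h8 := congrArg F hz
      rw [map_smul, map_add] at h8
      have h10 : F ((U.d (-(p+1+1)) (-(p+1))).hom
          ((s (-(p+1)) (-(p+1+1))) z)) = 0 := DFunLike.congr_fun hF0 _
      rw [h10, zero_add] at h8
      rw [← h8]
      simp
    exact ⟨F.comp (s (-p) (-(p+1))), Subtype.ext (by exact hval)⟩
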